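/- Let C_v be an algebraically closed complete non-archimedean field, f ∈ C_v[z] a postcritically bounded polynomial, and a ∈ C_v a point that avoids the postcritical set of f (i.e., some open disk around a is disjoint from the postcritical set). Then every element a₀ of the iterated preimage set T_∞(f,a) also avoids the postcritical set of f. -/
import Mathlib


/-- Let `C_v` be an algebraically closed complete non-archimedean
(nontrivially) normed field, `f` a postcritically bounded polynomial over it, and `a` a
point avoiding the postcritical set `P = {fⁿ(γ) : n ≥ 0, f'(γ) = 0}` of `f` (some open
ball about `a` is disjoint from `P`). Then every element `a₀` of the iterated preimage set
`T_∞(f,a)` also avoids the postcritical set of `f`. -/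
theorem stmt_16 {K : Type*} [NontriviallyNormedField K] [IsUltrametricDist K]
    [IsAlgClosed K] [CompleteSpace K]
    (f : Polynomial K)
    (P : Set K) (hP : P = {y : K | ∃ γ : K, f.derivative.eval γ = 0 ∧
      ∃ n : ℕ, (fun t => f.eval t)^[n] γ = y})
    (hbd : Bornology.IsBounded P)
    (a : K) (R : ℝ) (hR : 0 < R) (hav : Metric.ball a R ∩ P = ∅)
    (a₀ : K) (ha₀ : ∃ n : ℕ, (fun t => f.eval t)^[n] a₀ = a) :
    ∃ R₀ : ℝ, 0 < R₀ ∧ Metric.ball a₀ R₀ ∩ P = ∅ := by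
  obtain ⟨n, hn⟩ := ha₀
  have hc : Continuous ((fun t => f.eval t)^[n]) :=
    (f.continuous_aeval.congr (fun x => by simp)).iterate n
  have hca : ContinuousAt ((fun t => f.eval t)^[n]) a₀ := hc.continuousAt
  rw [Metric.continuousAt_iff] at hca
  obtain ⟨δ, hδ, hδ'⟩ := hca R hR
  refine ⟨δ, hδ, ?_⟩
  ext x
  simp only [Set.mem_inter_iff, Set.mem_empty_iff_false, iff_false, not_and]
  intro hx hxP
  have h1 : (fun t => f.eval t)^[n] x ∈ Metric.ball a R := by
    have := hδ' (Metric.mem_ball.mp hx)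
    rw [hn] at this
    exact Metric.mem_ball.mpr this
  have h2 : (fun t => f.eval t)^[n] x ∈ P := by
    rw [hP] at hxP ⊢
    obtain ⟨γ, hγ, m, hm⟩ := hxP
    exact ⟨γ, hγ, n + m, by rw [Function.iterate_add_apply, hm]⟩
  exact Set.eq_empty_iff_forall_notMem.mp hav _ ⟨h1, h2⟩
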